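/- Let a < b, t₀ ∈ (a,b), Z : ℂ → ℂ and ψ : ℝ → ℂ. Assume: ψ is differentiable at t₀; Z is complex-differentiable at ψ(t) and Z(ψ(t)) ≠ 0 for every t ∈ [a,b]; Z∘ψ is differentiable at t₀; deriv Z (ψ(t₀)) ≠ 0; and the phase of Z is constant along ψ, i.e. |Z(ψ(a))| · Z(ψ(t)) = |Z(ψ(t))| · Z(ψ(a)) for all t ∈ [a,b]. Then the velocity of ψ at t₀ points in the gradient direction of |Z|²: there exists s ∈ ℝ with deriv ψ t₀ = s · ( Z(ψ(t₀)) · conj(deriv Z (ψ(t₀))) ). -/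

import Mathlib

/-- Converse direction of Lemma on tropical edges: if the phase of `Z` is constant along a
curve `ψ` (with `Z` differentiable and nonvanishing along it, `Z∘ψ` differentiable, and
`Z'(ψ t₀) ≠ 0`), then the velocity of `ψ` at an interior time `t₀` is a real multiple of
the gradient direction `Z(ψ t₀)·conj(Z'(ψ t₀))` of `|Z|²`. -/
theorem velocity_in_gradient_direction_of_constant_phase
    (a b t₀ : ℝ) (hab : a < b) (ht₀ : t₀ ∈ Set.Ioo a b)
    (Z : ℂ → ℂ) (ψ : ℝ → ℂ)
    (hψ : DifferentiableAt ℝ ψ t₀)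
    (hZ : ∀ t ∈ Set.Icc a b, DifferentiableAt ℂ Z (ψ t))
    (hne : ∀ t ∈ Set.Icc a b, Z (ψ t) ≠ 0)
    (hZψ : DifferentiableAt ℝ (Z ∘ ψ) t₀)
    (hd : deriv Z (ψ t₀) ≠ 0)
    (hphase : ∀ t ∈ Set.Icc a b,
      ((‖Z (ψ a)‖ : ℝ) : ℂ) * Z (ψ t) = ((‖Z (ψ t)‖ : ℝ) : ℂ) * Z (ψ a)) :
    ∃ s : ℝ, deriv ψ t₀ = (s : ℂ) * (Z (ψ t₀) * (starRingEnd ℂ) (deriv Z (ψ t₀))) := by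
  have ht₀m : t₀ ∈ Set.Icc a b := Set.mem_Icc_of_Ioo ht₀
  have hwa : Z (ψ a) ≠ 0 := hne a ⟨le_refl a, hab.le⟩
  have habs : (‖Z (ψ a)‖ : ℂ) ≠ 0 := by
    exact_mod_cast norm_ne_zero_iff.mpr hwa
  set c : ℂ := Z (ψ a) / (‖Z (ψ a)‖) with hc
  have heq : ∀ t ∈ Set.Icc a b, Z (ψ t) = (‖Z (ψ t)‖ : ℂ) * c := by
    intro t ht
    rw [hc, mul_div_assoc', eq_div_iff habs]
    linear_combination (hphase t ht)
  set g : ℝ → ℝ := fun t => ‖Z (ψ t)‖ with hg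
  have hgd : DifferentiableAt ℝ g t₀ := by
    have h1 : g = fun t => ‖(Z ∘ ψ) t‖ := by
      ext t; simp [hg, Function.comp]
    rw [h1]
    exact hZψ.norm ℝ (by simpa [Function.comp] using hne t₀ ht₀m)
  have hnhds : Set.Icc a b ∈ nhds t₀ := Icc_mem_nhds ht₀.1 ht₀.2
  have hev : (Z ∘ ψ) =ᶠ[nhds t₀] fun t => ((g t : ℝ) : ℂ) * c :=
    Filter.eventuallyEq_of_mem hnhds fun t ht => heq t ht
  have hderiv1 : deriv (Z ∘ ψ) t₀ = ((deriv g t₀ : ℝ) : ℂ) * c := by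
    rw [hev.deriv_eq]
    exact ((hgd.hasDerivAt.ofReal_comp).mul_const c).deriv
  have hcomp : HasDerivAt (Z ∘ ψ) (deriv Z (ψ t₀) * deriv ψ t₀) t₀ :=
    (hZ t₀ ht₀m).hasDerivAt.comp t₀ hψ.hasDerivAt
  have hkey : deriv Z (ψ t₀) * deriv ψ t₀ = ((deriv g t₀ : ℝ) : ℂ) * c := by
    rw [← hcomp.deriv]; exact hderiv1
  have hgt₀ : (g t₀ : ℂ) ≠ 0 := by
    exact_mod_cast norm_ne_zero_iff.mpr (hne t₀ ht₀m)
  have hct₀ : Z (ψ t₀) = (g t₀ : ℂ) * c := heq t₀ ht₀m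
  refine ⟨deriv g t₀ / (g t₀ * ‖deriv Z (ψ t₀)‖ ^ 2), ?_⟩
  have hmc : deriv Z (ψ t₀) * (starRingEnd ℂ) (deriv Z (ψ t₀)) =
      ((‖deriv Z (ψ t₀)‖ : ℝ) ^ 2 : ℂ) := by
    rw [Complex.mul_conj, Complex.normSq_eq_norm_sq]
    push_cast; ring
  have habsd : (‖deriv Z (ψ t₀)‖ : ℂ) ≠ 0 := by
    exact_mod_cast norm_ne_zero_iff.mpr hd
  have hE : deriv ψ t₀ * ((g t₀ : ℂ) * ((‖deriv Z (ψ t₀)‖ : ℝ) ^ 2 : ℂ)) =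
      ((deriv g t₀ : ℝ) : ℂ) * (Z (ψ t₀) * (starRingEnd ℂ) (deriv Z (ψ t₀))) := by
    linear_combination ((g t₀ : ℂ) * (starRingEnd ℂ) (deriv Z (ψ t₀))) * hkey
      - (deriv ψ t₀ * (g t₀ : ℂ)) * hmc
      - (((deriv g t₀ : ℝ) : ℂ) * (starRingEnd ℂ) (deriv Z (ψ t₀))) * hct₀
  have hne2 : (g t₀ : ℂ) * ((‖deriv Z (ψ t₀)‖ : ℝ) ^ 2 : ℂ) ≠ 0 :=
    mul_ne_zero hgt₀ (pow_ne_zero 2 habsd)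
  push_cast
  rw [div_mul_eq_mul_div, eq_div_iff (by exact_mod_cast hne2)]
  push_cast at hE
  linear_combination hE
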